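/- Primal gauge properties: under the conic assumptions, maxq and ν are positive definite monotone gauges on the cone K (with monotonicity with respect to the order W ⪯_K W' defined by W' − W ∈ K), and maxq(W) ≤ ν(W) for every W ∈ K. -/

import Mathlib

open Matrix Finset

noncomputable section

/-- The trace inner product `⟨X,Y⟩ = tr(XY)` on symmetric matrices. -/
def ip {n : ℕ} (X Y : Matrix (Fin n) (Fin n) ℝ) : ℝ := (X * Y).trace

/-- The signed incidence vector `s_U ∈ {±1}ⁿ` of `U ⊆ [n]`. -/
def sgn {n : ℕ} (U : Finset (Fin n)) : Fin n → ℝ := fun i => if i ∈ U then 1 else -1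

/-- The rank-one sign matrix `s_U s_Uᵀ`. -/
def stensor {n : ℕ} (U : Finset (Fin n)) : Matrix (Fin n) (Fin n) ℝ :=
  fun i j => sgn U i * sgn U j

/-- The quadratic form `vᵀ W v`. -/
def qform {n : ℕ} (W : Matrix (Fin n) (Fin n) ℝ) (v : Fin n → ℝ) : ℝ :=
  ∑ i, ∑ j, v i * W i j * v j

/-- The dual cone (within the space `Sym(n)` of symmetric matrices) of a set `S ⊆ Sym(n)`. -/
def dualSet {n : ℕ} (S : Set (Matrix (Fin n) (Fin n) ℝ)) : Set (Matrix (Fin n) (Fin n) ℝ) :=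
  {X | X.IsSymm ∧ ∀ Y ∈ S, 0 ≤ ip X Y}

/-- The data of the conic framework: closed convex cones `A`, `K̂` of symmetric matrices,
and a linear map `L`. -/
structure ConicSetting (n k : ℕ) where
  A : Set (Matrix (Fin n) (Fin n) ℝ)
  Khat : Set (Matrix (Fin n) (Fin n) ℝ)
  L : Matrix (Fin n) (Fin n) ℝ →ₗ[ℝ] (Fin k → ℝ)
  A_symm : ∀ X ∈ A, X.IsSymm
  A_closed : IsClosed A
  A_smul : ∀ c : ℝ, 0 ≤ c → ∀ X ∈ A, c • X ∈ A
  A_add : ∀ X ∈ A, ∀ Y ∈ A, X + Y ∈ A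
  Khat_symm : ∀ X ∈ Khat, X.IsSymm
  Khat_closed : IsClosed Khat
  Khat_smul : ∀ c : ℝ, 0 ≤ c → ∀ X ∈ Khat, c • X ∈ Khat
  Khat_add : ∀ X ∈ Khat, ∀ Y ∈ Khat, X + Y ∈ Khat

namespace ConicSetting

variable {n k : ℕ} (S : ConicSetting n k)

/-- `K := K̂ ∩ ker L`. -/
def K : Set (Matrix (Fin n) (Fin n) ℝ) := {X | X ∈ S.Khat ∧ S.L X = 0}

/-- `F(A) := {U ⊆ [n] : s_U s_Uᵀ ∈ A}`. -/
def FA : Set (Finset (Fin n)) := {U | stensor U ∈ S.A}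

/-- The range of the adjoint of `L` restricted to `Sym(n)`, i.e. the orthogonal complement
of `ker L ∩ Sym(n)` inside `Sym(n)`. -/
def rangeLstar : Set (Matrix (Fin n) (Fin n) ℝ) :=
  {Q | Q.IsSymm ∧ ∀ Y : Matrix (Fin n) (Fin n) ℝ, Y.IsSymm → S.L Y = 0 → ip Q Y = 0}

/-- `lift := K̂* + range(L*)`. -/
def lift : Set (Matrix (Fin n) (Fin n) ℝ) :=
  {X | ∃ P ∈ dualSet S.Khat, ∃ Q ∈ S.rangeLstar, X = P + Q}

/-- `K* := {X ∈ ker L : ⟨X,Y⟩ ≥ 0 for all Y ∈ K}` (within `Sym(n)`). -/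
def Kstar : Set (Matrix (Fin n) (Fin n) ℝ) :=
  {X | X.IsSymm ∧ S.L X = 0 ∧ ∀ Y ∈ S.K, 0 ≤ ip X Y}

/-- The convex cone generated by `CUT^A = conv{s_U s_Uᵀ : U ∈ F(A)}`. -/
def coneCUT : Set (Matrix (Fin n) (Fin n) ℝ) :=
  {X | ∃ y : Finset (Fin n) → ℝ, (∀ U, 0 ≤ y U) ∧ (∀ U, U ∉ S.FA → y U = 0) ∧
    X = ∑ U : Finset (Fin n), y U • stensor U}

/-- The conic assumptions: `A ⊆ PSD(n)`, `K ⊆ A*`, `cone(CUT^A)` has nonempty interior in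
`Sym(n)`, and `K̂` has a nonzero Slater point in `ker L` (interior taken in `Sym(n)`). -/
structure Assumptions : Prop where
  A_psd : ∀ X ∈ S.A, X.PosSemidef
  K_sub_Astar : S.K ⊆ dualSet S.A
  cut_interior : (interior {X : {M : Matrix (Fin n) (Fin n) ℝ // M.IsSymm} |
      (X : Matrix (Fin n) (Fin n) ℝ) ∈ S.coneCUT}).Nonempty
  Khat_slater : ∃ X : {M : Matrix (Fin n) (Fin n) ℝ // M.IsSymm},
      (X : Matrix (Fin n) (Fin n) ℝ) ≠ 0 ∧
      X ∈ interior {M : {M : Matrix (Fin n) (Fin n) ℝ // M.IsSymm} |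
        (M : Matrix (Fin n) (Fin n) ℝ) ∈ S.Khat} ∧
      S.L X = 0

/-- `maxq(W) := max{s_Uᵀ W s_U : U ∈ F(A)}`. -/
def maxq (W : Matrix (Fin n) (Fin n) ℝ) : ℝ :=
  sSup {r | ∃ U ∈ S.FA, r = qform W (sgn U)}

/-- `ν(W) := max{⟨W,Y⟩ : Y ∈ A, diag(Y) = 1}`. -/
def nu (W : Matrix (Fin n) (Fin n) ℝ) : ℝ :=
  sSup {r | ∃ Y ∈ S.A, (∀ i, Y i i = 1) ∧ r = ip W Y}

/-- `y ∈ ℝ₊^{F(A)}` is a tensor sign cover for `Z`: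
`∑_{U ∈ F(A)} y_U s_U s_Uᵀ ⪰_lift Z`. -/
def CoverFeas (Z : Matrix (Fin n) (Fin n) ℝ) (y : Finset (Fin n) → ℝ) : Prop :=
  (∀ U, 0 ≤ y U) ∧ (∀ U, U ∉ S.FA → y U = 0) ∧
  (∑ U : Finset (Fin n), y U • stensor U) - Z ∈ S.lift

/-- `fevc(Z)`: minimum total weight of a tensor sign cover of `Z`. -/
def fevc (Z : Matrix (Fin n) (Fin n) ℝ) : ℝ :=
  sInf {r | ∃ y, S.CoverFeas Z y ∧ r = ∑ U : Finset (Fin n), y U}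

/-- `ν°(Z) := inf{μ ≥ 0 : ∃ Y ∈ A, diag(Y) = μ·1, Y ⪰_lift Z}`. -/
def nuPolar (Z : Matrix (Fin n) (Fin n) ℝ) : ℝ :=
  sInf {μ | 0 ≤ μ ∧ ∃ Y ∈ S.A, (∀ i, Y i i = μ) ∧ Y - Z ∈ S.lift}

end ConicSetting

/-- `φ` is a positive definite monotone gauge on the convex cone `C`:
nonnegative on `C`, `φ(0) = 0`, positively homogeneous, sublinear, positive on
nonzero points, and monotone for the order induced by `C`. -/
def IsPDMGauge {E : Type*} [AddCommGroup E] [Module ℝ E] (C : Set E) (φ : E → ℝ) : Prop :=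
  (∀ x ∈ C, 0 ≤ φ x) ∧
  φ 0 = 0 ∧
  (∀ c : ℝ, 0 ≤ c → ∀ x ∈ C, φ (c • x) = c * φ x) ∧
  (∀ x ∈ C, ∀ y ∈ C, φ (x + y) ≤ φ x + φ y) ∧
  (∀ x ∈ C, x ≠ 0 → 0 < φ x) ∧
  (∀ x ∈ C, ∀ y ∈ C, y - x ∈ C → φ x ≤ φ y)



section AuxLemmas

variable {n : ℕ}

lemma ip_eq_sum (X Y : Matrix (Fin n) (Fin n) ℝ) : ip X Y = ∑ i, ∑ j, X i j * Y j i := by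
  simp [ip, Matrix.trace, Matrix.mul_apply, Matrix.diag]

lemma ip_zero_left (Y : Matrix (Fin n) (Fin n) ℝ) : ip 0 Y = 0 := by
  simp [ip]

lemma ip_add_left (X X' Y : Matrix (Fin n) (Fin n) ℝ) : ip (X + X') Y = ip X Y + ip X' Y := by
  simp [ip, Matrix.add_mul]

lemma ip_smul_left (c : ℝ) (X Y : Matrix (Fin n) (Fin n) ℝ) : ip (c • X) Y = c * ip X Y := by
  simp [ip, Matrix.smul_mul]

lemma ip_sub_left (X X' Y : Matrix (Fin n) (Fin n) ℝ) : ip (X - X') Y = ip X Y - ip X' Y := by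
  simp [ip, Matrix.sub_mul]

lemma ip_add_right (W Y Z : Matrix (Fin n) (Fin n) ℝ) : ip W (Y + Z) = ip W Y + ip W Z := by
  simp [ip, Matrix.mul_add]

lemma ip_smul_right (c : ℝ) (W Y : Matrix (Fin n) (Fin n) ℝ) : ip W (c • Y) = c * ip W Y := by
  simp [ip, Matrix.mul_smul]

lemma ip_sum_smul (W : Matrix (Fin n) (Fin n) ℝ) (y : Finset (Fin n) → ℝ)
    (f : Finset (Fin n) → Matrix (Fin n) (Fin n) ℝ) :
    ip W (∑ U : Finset (Fin n), y U • f U) = ∑ U : Finset (Fin n), y U * ip W (f U) := by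
  simp [ip, Matrix.mul_sum, Matrix.mul_smul, Matrix.trace_sum]

lemma qform_eq_ip (W : Matrix (Fin n) (Fin n) ℝ) (U : Finset (Fin n)) :
    qform W (sgn U) = ip W (stensor U) := by
  rw [qform, ip_eq_sum]
  exact Finset.sum_congr rfl fun i _ => Finset.sum_congr rfl fun j _ => by
    simp [stensor]; ring

lemma stensor_diag (U : Finset (Fin n)) (i : Fin n) : stensor U i i = 1 := by
  unfold stensor sgn; split <;> norm_num

lemma pert (S' : Set {M : Matrix (Fin n) (Fin n) ℝ // M.IsSymm})
    (x₀ : {M : Matrix (Fin n) (Fin n) ℝ // M.IsSymm}) (hx : x₀ ∈ interior S')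
    (Y : Matrix (Fin n) (Fin n) ℝ) (hY : Y.IsSymm) :
    ∃ t : ℝ, t ≠ 0 ∧ (x₀ : Matrix (Fin n) (Fin n) ℝ) + t • Y ∈ Subtype.val '' S' := by
  have hsymm : ∀ t : ℝ, ((x₀ : Matrix (Fin n) (Fin n) ℝ) + t • Y).IsSymm := fun t => by
    have h1 := x₀.2
    unfold Matrix.IsSymm at *
    rw [Matrix.transpose_add, Matrix.transpose_smul, h1, hY]
  set g : ℝ → {M : Matrix (Fin n) (Fin n) ℝ // M.IsSymm} := fun t => ⟨_, hsymm t⟩ with hg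
  have hcont : Continuous g := by
    refine Continuous.subtype_mk ?_ _
    exact continuous_const.add (continuous_id.smul continuous_const)
  have hopen : IsOpen (g ⁻¹' interior S') := isOpen_interior.preimage hcont
  have h0 : (0:ℝ) ∈ g ⁻¹' interior S' := by
    have hg0 : g 0 = x₀ := Subtype.ext (by simp [hg])
    simpa [Set.mem_preimage, hg0] using hx
  obtain ⟨ε, hε, hball⟩ := Metric.isOpen_iff.mp hopen 0 h0
  have hmem : g (ε/2) ∈ S' := interior_subset (hball (by
    simp only [Metric.mem_ball, Real.dist_eq, sub_zero]
    rw [abs_of_pos (by linarith)]; linarith))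
  exact ⟨ε/2, by positivity, ⟨g (ε/2), hmem, rfl⟩⟩

lemma psd_entry_le {M : Matrix (Fin n) (Fin n) ℝ} (hM : M.PosSemidef)
    (hd : ∀ i, M i i = 1) (i j : Fin n) : |M i j| ≤ 1 := by
  rcases eq_or_ne i j with rfl | hij
  · simp [hd i]
  have hsym : M j i = M i j := by
    have h := congrFun (congrFun hM.1 i) j
    simpa [Matrix.conjTranspose_apply] using h
  have key : ∀ c : ℝ, 0 ≤ 1 + 2 * c * M i j + c ^ 2 := by
    intro c
    have h0 := hM.dotProduct_mulVec_nonneg (Pi.single i 1 + Pi.single j c)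
    simp only [star_trivial, Matrix.mulVec_add, Matrix.mulVec_single, add_dotProduct,
      single_dotProduct, Pi.add_apply, Pi.smul_apply, Matrix.col_apply,
      MulOpposite.smul_eq_mul_unop, MulOpposite.unop_op] at h0
    rw [hd i, hd j, hsym] at h0
    nlinarith [h0]
  have h1 := key 1
  have h2 := key (-1)
  rw [abs_le]; constructor <;> nlinarith

lemma vanish_eq_zero {k : ℕ} (S : ConicSetting n k)
    (hc : (interior {X : {M : Matrix (Fin n) (Fin n) ℝ // M.IsSymm} |
      (X : Matrix (Fin n) (Fin n) ℝ) ∈ S.coneCUT}).Nonempty)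
    {W : Matrix (Fin n) (Fin n) ℝ} (hW : W.IsSymm)
    (h0 : ∀ U ∈ S.FA, ip W (stensor U) = 0) : W = 0 := by
  obtain ⟨x₀, hx₀⟩ := hc
  have hvanish : ∀ X ∈ S.coneCUT, ip W X = 0 := by
    rintro X ⟨y, hy0, hysupp, rfl⟩
    rw [ip_sum_smul]
    refine Finset.sum_eq_zero fun U _ => ?_
    by_cases hU : U ∈ S.FA
    · rw [h0 U hU, mul_zero]
    · rw [hysupp U hU, zero_mul]
  have key : ∀ Y : Matrix (Fin n) (Fin n) ℝ, Y.IsSymm → ip W Y = 0 := by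
    intro Y hY
    obtain ⟨t, ht, p, hp, hpe⟩ := pert _ x₀ hx₀ Y hY
    have h1 : ip W ((x₀ : Matrix (Fin n) (Fin n) ℝ) + t • Y) = 0 := by
      rw [← hpe]; exact hvanish _ hp
    have hx₀S : x₀ ∈ {X : {M : Matrix (Fin n) (Fin n) ℝ // M.IsSymm} |
        (X : Matrix (Fin n) (Fin n) ℝ) ∈ S.coneCUT} := interior_subset hx₀
    have h2 : ip W (x₀ : Matrix (Fin n) (Fin n) ℝ) = 0 := hvanish _ hx₀S
    rw [ip_add_right, ip_smul_right, h2, zero_add] at h1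
    exact (mul_eq_zero.mp h1).resolve_left ht
  have hWW : ip W W = 0 := key W hW
  have hsq : ∑ i, ∑ j, (W i j) ^ 2 = 0 := by
    rw [← hWW, ip_eq_sum]
    refine Finset.sum_congr rfl fun i _ => Finset.sum_congr rfl fun j _ => ?_
    have hji : W j i = W i j := by
      have h := congrFun (congrFun hW i) j
      simpa [Matrix.transpose_apply] using h
    rw [hji]; ring
  ext i j
  have h1 : ∑ j, (W i j) ^ 2 = 0 :=
    (Finset.sum_eq_zero_iff_of_nonneg
      (fun i _ => Finset.sum_nonneg fun j _ => sq_nonneg _)).mp hsq i (Finset.mem_univ i)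
  have h2 : (W i j) ^ 2 = 0 :=
    (Finset.sum_eq_zero_iff_of_nonneg (fun j _ => sq_nonneg _)).mp h1 j (Finset.mem_univ j)
  simpa using pow_eq_zero_iff (two_ne_zero) |>.mp h2

lemma FA_nonempty {k : ℕ} (hn : 1 ≤ n) (S : ConicSetting n k)
    (hc : (interior {X : {M : Matrix (Fin n) (Fin n) ℝ // M.IsSymm} |
      (X : Matrix (Fin n) (Fin n) ℝ) ∈ S.coneCUT}).Nonempty) : S.FA.Nonempty := by
  by_contra h
  rw [Set.not_nonempty_iff_eq_empty] at h
  obtain ⟨x₀, hx₀⟩ := hc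
  have hzero : ∀ X ∈ S.coneCUT, X = 0 := by
    rintro X ⟨y, hy0, hysupp, rfl⟩
    have hy : ∀ U, y U = 0 := fun U => hysupp U (by simp [h])
    simp [hy]
  obtain ⟨t, ht, p, hp, hpe⟩ := pert _ x₀ hx₀ 1 Matrix.isSymm_one
  have h1 : (x₀ : Matrix (Fin n) (Fin n) ℝ) + t • 1 = 0 := by
    rw [← hpe]; exact hzero _ hp
  have hx₀S : x₀ ∈ {X : {M : Matrix (Fin n) (Fin n) ℝ // M.IsSymm} |
      (X : Matrix (Fin n) (Fin n) ℝ) ∈ S.coneCUT} := interior_subset hx₀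
  have h2 : (x₀ : Matrix (Fin n) (Fin n) ℝ) = 0 := hzero _ hx₀S
  rw [h2, zero_add] at h1
  have h3 := congrFun (congrFun h1 ⟨0, hn⟩) ⟨0, hn⟩
  simp [Matrix.one_apply_eq] at h3
  exact ht h3

end AuxLemmas

open Pointwise in
/-- primal gauge properties: under the conic assumptions, `maxq` and
`ν` are positive definite monotone gauges on `K`, and `maxq ≤ ν` on `K`. -/
theorem primal_gauge_properties {n k : ℕ} (hn : 1 ≤ n) (S : ConicSetting n k)
    (hS : S.Assumptions) :
    IsPDMGauge S.K S.maxq ∧ IsPDMGauge S.K S.nu ∧ ∀ W ∈ S.K, S.maxq W ≤ S.nu W := by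
  classical
  obtain ⟨U₀, hU₀⟩ := FA_nonempty hn S hS.cut_interior
  have hmq : ∀ W : Matrix (Fin n) (Fin n) ℝ,
      S.maxq W = sSup ((fun U => ip W (stensor U)) '' S.FA) := by
    intro W
    unfold ConicSetting.maxq
    congr 1
    ext r
    simp only [Set.mem_image, Set.mem_setOf_eq]
    constructor
    · rintro ⟨U, hU, rfl⟩; exact ⟨U, hU, (qform_eq_ip W U).symm⟩
    · rintro ⟨U, hU, rfl⟩; exact ⟨U, hU, (qform_eq_ip W U).symm⟩
  have hmbdd : ∀ W : Matrix (Fin n) (Fin n) ℝ,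
      BddAbove ((fun U => ip W (stensor U)) '' S.FA) :=
    fun W => (S.FA.toFinite.image _).bddAbove
  have hmne : ∀ W : Matrix (Fin n) (Fin n) ℝ,
      ((fun U => ip W (stensor U)) '' S.FA).Nonempty :=
    fun W => ⟨_, Set.mem_image_of_mem _ hU₀⟩
  have hnu : ∀ W : Matrix (Fin n) (Fin n) ℝ,
      S.nu W = sSup {r | ∃ Y ∈ S.A, (∀ i, Y i i = 1) ∧ r = ip W Y} := fun W => rfl
  have hnne : ∀ W : Matrix (Fin n) (Fin n) ℝ,
      ({r | ∃ Y ∈ S.A, (∀ i, Y i i = 1) ∧ r = ip W Y}).Nonempty :=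
    fun W => ⟨ip W (stensor U₀), stensor U₀, hU₀, stensor_diag U₀, rfl⟩
  have hnbdd : ∀ W : Matrix (Fin n) (Fin n) ℝ,
      BddAbove {r | ∃ Y ∈ S.A, (∀ i, Y i i = 1) ∧ r = ip W Y} := by
    intro W
    refine ⟨∑ i, ∑ j, |W i j|, ?_⟩
    rintro r ⟨Y, hY, hd, rfl⟩
    rw [ip_eq_sum]
    refine Finset.sum_le_sum fun i _ => Finset.sum_le_sum fun j _ => ?_
    have h1 : |Y j i| ≤ 1 := psd_entry_le (hS.A_psd Y hY) hd j i
    calc W i j * Y j i ≤ |W i j * Y j i| := le_abs_self _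
      _ = |W i j| * |Y j i| := abs_mul _ _
      _ ≤ |W i j| * 1 := mul_le_mul_of_nonneg_left h1 (abs_nonneg _)
      _ = |W i j| := mul_one _
  have hKd : ∀ W ∈ S.K, ∀ Y ∈ S.A, 0 ≤ ip W Y := fun W hW => (hS.K_sub_Astar hW).2
  have hWsymm : ∀ W ∈ S.K, W.IsSymm := fun W hW => S.Khat_symm W hW.1
  have hle : ∀ W ∈ S.K, S.maxq W ≤ S.nu W := by
    intro W _
    rw [hmq W, hnu W]
    refine csSup_le (hmne W) ?_
    rintro r ⟨U, hU, rfl⟩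
    exact le_csSup (hnbdd W) ⟨stensor U, hU, stensor_diag U, rfl⟩
  have hmpos : ∀ W ∈ S.K, W ≠ 0 → 0 < S.maxq W := by
    intro W hW hW0
    rw [hmq W]
    by_contra hle0
    push_neg at hle0
    apply hW0
    refine vanish_eq_zero S hS.cut_interior (hWsymm W hW) fun U hU => ?_
    have hge : 0 ≤ ip W (stensor U) := hKd W hW _ hU
    have hles : ip W (stensor U) ≤ sSup ((fun U => ip W (stensor U)) '' S.FA) :=
      le_csSup (hmbdd W) (Set.mem_image_of_mem _ hU)
    linarith
  have hmnonneg : ∀ W ∈ S.K, 0 ≤ S.maxq W := by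
    intro W hW
    rw [hmq W]
    exact (hKd W hW _ hU₀).trans (le_csSup (hmbdd W) (Set.mem_image_of_mem _ hU₀))
  have hm0 : S.maxq 0 = 0 := by
    rw [hmq 0]
    have hset : (fun U => ip (0 : Matrix (Fin n) (Fin n) ℝ) (stensor U)) '' S.FA = {0} := by
      apply Set.eq_singleton_iff_nonempty_unique_mem.mpr
      exact ⟨hmne 0, by rintro r ⟨U, hU, rfl⟩; exact ip_zero_left _⟩
    rw [hset, csSup_singleton]
  have hn0 : S.nu 0 = 0 := by
    rw [hnu 0]
    have hset : {r | ∃ Y ∈ S.A, (∀ i, Y i i = 1) ∧ r = ip (0 : Matrix (Fin n) (Fin n) ℝ) Y}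
        = {0} := by
      apply Set.eq_singleton_iff_nonempty_unique_mem.mpr
      refine ⟨hnne 0, ?_⟩
      rintro r ⟨Y, hY, hd, rfl⟩; exact ip_zero_left _
    rw [hset, csSup_singleton]
  have hmhom : ∀ c : ℝ, 0 ≤ c → ∀ W : Matrix (Fin n) (Fin n) ℝ,
      S.maxq (c • W) = c * S.maxq W := by
    intro c hc W
    rw [hmq, hmq]
    have hset : (fun U => ip (c • W) (stensor U)) '' S.FA
        = c • ((fun U => ip W (stensor U)) '' S.FA) := by
      rw [← Set.image_smul, Set.image_image]
      exact Set.image_congr fun U _ => by rw [ip_smul_left]; rfl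
    rw [hset, Real.sSup_smul_of_nonneg hc, smul_eq_mul]
  have hnhom : ∀ c : ℝ, 0 ≤ c → ∀ W : Matrix (Fin n) (Fin n) ℝ,
      S.nu (c • W) = c * S.nu W := by
    intro c hc W
    rw [hnu, hnu]
    have hset : {r | ∃ Y ∈ S.A, (∀ i, Y i i = 1) ∧ r = ip (c • W) Y}
        = c • {r | ∃ Y ∈ S.A, (∀ i, Y i i = 1) ∧ r = ip W Y} := by
      ext r
      simp only [Set.mem_smul_set, Set.mem_setOf_eq]
      constructor
      · rintro ⟨Y, hY, hd, rfl⟩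
        exact ⟨ip W Y, ⟨Y, hY, hd, rfl⟩, by rw [ip_smul_left]; rfl⟩
      · rintro ⟨x, ⟨Y, hY, hd, rfl⟩, rfl⟩
        exact ⟨Y, hY, hd, by rw [ip_smul_left]; rfl⟩
    rw [hset, Real.sSup_smul_of_nonneg hc, smul_eq_mul]
  have hmadd : ∀ W ∈ S.K, ∀ W' ∈ S.K, S.maxq (W + W') ≤ S.maxq W + S.maxq W' := by
    intro W _ W' _
    rw [hmq, hmq, hmq]
    refine csSup_le (hmne _) ?_
    rintro r ⟨U, hU, rfl⟩
    simp only
    rw [ip_add_left]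
    exact add_le_add (le_csSup (hmbdd W) (Set.mem_image_of_mem _ hU))
      (le_csSup (hmbdd W') (Set.mem_image_of_mem _ hU))
  have hnadd : ∀ W ∈ S.K, ∀ W' ∈ S.K, S.nu (W + W') ≤ S.nu W + S.nu W' := by
    intro W _ W' _
    rw [hnu, hnu, hnu]
    refine csSup_le (hnne _) ?_
    rintro r ⟨Y, hY, hd, rfl⟩
    rw [ip_add_left]
    exact add_le_add (le_csSup (hnbdd W) ⟨Y, hY, hd, rfl⟩)
      (le_csSup (hnbdd W') ⟨Y, hY, hd, rfl⟩)
  have hmmono : ∀ W ∈ S.K, ∀ W' ∈ S.K, W' - W ∈ S.K → S.maxq W ≤ S.maxq W' := by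
    intro W _ W' _ hsub
    rw [hmq, hmq]
    refine csSup_le (hmne W) ?_
    rintro r ⟨U, hU, rfl⟩
    have h1 : 0 ≤ ip (W' - W) (stensor U) := hKd _ hsub _ hU
    rw [ip_sub_left] at h1
    simp only
    exact le_trans (by linarith) (le_csSup (hmbdd W') (Set.mem_image_of_mem _ hU))
  have hnmono : ∀ W ∈ S.K, ∀ W' ∈ S.K, W' - W ∈ S.K → S.nu W ≤ S.nu W' := by
    intro W _ W' _ hsub
    rw [hnu, hnu]
    refine csSup_le (hnne W) ?_
    rintro r ⟨Y, hY, hd, rfl⟩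
    have h1 : 0 ≤ ip (W' - W) Y := hKd _ hsub _ hY
    rw [ip_sub_left] at h1
    exact le_trans (by linarith) (le_csSup (hnbdd W') ⟨Y, hY, hd, rfl⟩)
  exact ⟨⟨hmnonneg, hm0, fun c hc W _ => hmhom c hc W, hmadd, hmpos, hmmono⟩,
    ⟨fun W hW => (hmnonneg W hW).trans (hle W hW), hn0, fun c hc W _ => hnhom c hc W, hnadd,
     fun W hW hW0 => lt_of_lt_of_le (hmpos W hW hW0) (hle W hW), hnmono⟩, hle⟩
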